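/- Let q be a prime power, m = d·k positive integers, and f ∈ 𝔽_q[X] monic of degree m. Then f is irreducible over 𝔽_q if and only if there exists a monic irreducible polynomial f₀ ∈ 𝔽_{q^k}[X] of degree d whose coefficients generate 𝔽_{q^k} over 𝔽_q, such that f = ∏_{μ=0}^{k-1} f₀^{(μ)}, where f₀^{(μ)} is obtained from f₀ by raising every coefficient to the power q^μ. -/

import Mathlib

open Polynomial

section Aux
private lemma aux_card_le {E : Type*} [Field E] [Fintype E] {n : ℕ} (hn : 1 < n)
    (h : ∀ x : E, x ^ n = x) : Fintype.card E ≤ n := by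
  classical
  have hne : (X ^ n - X : E[X]) ≠ 0 := FiniteField.X_pow_card_sub_X_ne_zero E hn
  have hsub : (Finset.univ : Finset E) ⊆ (X ^ n - X : E[X]).roots.toFinset := by
    intro x _
    simp only [Multiset.mem_toFinset, mem_roots hne, IsRoot, eval_sub, eval_pow, eval_X]
    rw [h x, sub_self]
  calc Fintype.card E ≤ (X ^ n - X : E[X]).roots.toFinset.card := by
        rw [← Finset.card_univ]; exact Finset.card_le_card hsub
    _ ≤ Multiset.card (X ^ n - X : E[X]).roots := Multiset.toFinset_card_le _
    _ ≤ (X ^ n - X : E[X]).natDegree := card_roots' _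
    _ = n := FiniteField.X_pow_card_sub_X_natDegree_eq E hn

private lemma aux_eq_of_monic_dvd {K : Type*} [Field K] {a b : K[X]} (ha : a.Monic)
    (hb : b.Monic) (hdvd : a ∣ b) (hdeg : b.natDegree ≤ a.natDegree) : a = b :=
  Polynomial.eq_of_monic_of_associated ha hb
    (associated_of_dvd_of_natDegree_le hdvd hb.ne_zero hdeg)

private lemma aux_mem_range {F E : Type*} [Field F] [Fintype F] [Field E] [Algebra F E]
    {x : E} (hx : x ^ Fintype.card F = x) : x ∈ (algebraMap F E).range := by
  classical
  set q := Fintype.card F with hq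
  have hq1 : 1 < q := Fintype.one_lt_card
  have hne : (X ^ q - X : E[X]) ≠ 0 := FiniteField.X_pow_card_sub_X_ne_zero E hq1
  set T : Finset E := (Finset.univ : Finset F).image (algebraMap F E) with hT
  have hTsub : T ⊆ (X ^ q - X : E[X]).roots.toFinset := by
    intro y hy
    obtain ⟨c, _, rfl⟩ := Finset.mem_image.mp hy
    simp only [Multiset.mem_toFinset, mem_roots hne, IsRoot, eval_sub, eval_pow, eval_X]
    rw [← map_pow, FiniteField.pow_card, sub_self]
  by_contra hxr
  have hxT : x ∉ T := by
    intro hmem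
    obtain ⟨c, _, rfl⟩ := Finset.mem_image.mp hmem
    exact hxr ⟨c, rfl⟩
  have hins : insert x T ⊆ (X ^ q - X : E[X]).roots.toFinset := by
    intro y hy
    rcases Finset.mem_insert.mp hy with rfl | hy
    · simp only [Multiset.mem_toFinset, mem_roots hne, IsRoot, eval_sub, eval_pow, eval_X]
      rw [hx, sub_self]
    · exact hTsub hy
  have hcard2 : q + 1 ≤ q := by
    calc q + 1 = (insert x T).card := by
          rw [Finset.card_insert_of_notMem hxT, hT,
            Finset.card_image_of_injective _ (algebraMap F E).injective, Finset.card_univ]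
      _ ≤ (X ^ q - X : E[X]).roots.toFinset.card := Finset.card_le_card hins
      _ ≤ Multiset.card (X ^ q - X : E[X]).roots := Multiset.toFinset_card_le _
      _ ≤ (X ^ q - X : E[X]).natDegree := card_roots' _
      _ = q := FiniteField.X_pow_card_sub_X_natDegree_eq E hq1
  omega

private lemma aux_minpoly_natDegree {F E K : Type*} [Field F] [Field E] [Field K]
    [Algebra F E] [Algebra F K] [Algebra E K] [IsScalarTower F E K]
    [FiniteDimensional E K] (α : K) (h : Algebra.adjoin F ({α} : Set K) = ⊤) :
    (minpoly E α).natDegree = Module.finrank E K := by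
  have hint : IsIntegral E α := IsIntegral.of_finite E α
  have htop : IntermediateField.adjoin E ({α} : Set K) = ⊤ := by
    rw [eq_top_iff]
    intro x _
    have hx : x ∈ Algebra.adjoin F ({α} : Set K) := h ▸ Algebra.mem_top
    have hle : Algebra.adjoin F ({α} : Set K) ≤
        Subalgebra.restrictScalars F (IntermediateField.adjoin E ({α} : Set K)).toSubalgebra :=
      Algebra.adjoin_le (by
        intro y hy
        rcases hy with rfl
        exact IntermediateField.subset_adjoin E _ rfl)
    exact hle hx
  rw [← IntermediateField.adjoin.finrank hint, htop, IntermediateField.finrank_top']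
end Aux

/-- A monic polynomial `f ∈ 𝔽_q[X]` of degree `m = d * k` is irreducible over `𝔽_q`
iff there is a monic irreducible `f₀ ∈ 𝔽_{q^k}[X]` of degree `d` whose coefficients
generate `𝔽_{q^k}` over `𝔽_q`, with `f = ∏_{μ=0}^{k-1} f₀^{(μ)}`, where `f₀^{(μ)}`
raises every coefficient of `f₀` to the power `q^μ`. -/
theorem stmt8 (p : ℕ) [Fact p.Prime] (F : Type*) [Field F] [Fintype F] [CharP F p]
    (e : ℕ) (hcard : Fintype.card F = p ^ e)
    (E : Type*) [Field E] [Algebra F E] [ExpChar E p]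
    (d k m : ℕ) (hd : 0 < d) (hk : 0 < k) (hm : m = d * k)
    (hE : Module.finrank F E = k)
    (f : Polynomial F) (hmonic : f.Monic) (hdeg : f.natDegree = m) :
    Irreducible f ↔
      ∃ f₀ : Polynomial E, f₀.Monic ∧ Irreducible f₀ ∧ f₀.natDegree = d ∧
        Algebra.adjoin F (Set.range f₀.coeff) = ⊤ ∧
        f.map (algebraMap F E) =
          ∏ μ ∈ Finset.range k, f₀.map (iterateFrobenius E p (e * μ)) := by
  subst hm
  have hq1 : 1 < Fintype.card F := Fintype.one_lt_card
  have hp1 : 1 < p := (Fact.out : p.Prime).one_lt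
  have he1 : 1 ≤ e := by
    by_contra h
    have : e = 0 := by omega
    rw [this, pow_zero] at hcard
    omega
  haveI : FiniteDimensional F E := Module.finite_of_finrank_pos (by rw [hE]; exact hk)
  haveI : Finite E := Module.finite_of_finite F
  haveI : Fintype E := Fintype.ofFinite E
  have hcardE : Fintype.card E = p ^ (e * k) := by
    rw [Module.card_eq_pow_finrank (K := F) (V := E), hE, hcard, ← pow_mul]
  have hFfix : ∀ (μ : ℕ) (c : F),
      iterateFrobenius E p (e * μ) (algebraMap F E c) = algebraMap F E c := by
    intro μ c
    rw [iterateFrobenius_def, ← map_pow]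
    congr 1
    rw [pow_mul, ← hcard]
    exact FiniteField.pow_card_pow μ c
  have hcomm : ∀ μ : ℕ, (iterateFrobenius E p (e * μ)).comp (algebraMap F E) = algebraMap F E :=
    fun μ => RingHom.ext (hFfix μ)
  have hEfix : ∀ x : E, x ^ p ^ (e * k) = x := fun x => by
    rw [← hcardE]; exact FiniteField.pow_card x
  constructor
  · intro hirr
    haveI : Fact (Irreducible f) := ⟨hirr⟩
    set K := AdjoinRoot f with hKdef
    set α : K := AdjoinRoot.root f with hαdef
    haveI : Module.Finite F K := (AdjoinRoot.powerBasis hmonic.ne_zero).finite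
    haveI : Finite K := Module.finite_of_finite F
    haveI : Fintype K := Fintype.ofFinite K
    have hfrK : Module.finrank F K = d * k := by
      rw [(AdjoinRoot.powerBasis hmonic.ne_zero).finrank]
      simpa [AdjoinRoot.powerBasis] using hdeg
    have hcardK : Fintype.card K = p ^ (e * (d * k)) := by
      rw [Module.card_eq_pow_finrank (K := F) (V := K), hfrK, hcard, ← pow_mul]
    set a := p ^ (e * k) with hadef
    set b := p ^ (e * (d * k)) with hbdef
    have ha1 : 1 < a := Nat.one_lt_pow (by positivity) hp1
    have hb1 : 1 < b := Nat.one_lt_pow (by positivity) hp1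
    -- X ^ a - X divides X ^ b - X over F
    have hdvdab : (X ^ a - X : F[X]) ∣ (X ^ b - X : F[X]) := by
      have hab : a ^ d = b := by rw [hadef, hbdef, ← pow_mul]; ring_nf
      obtain ⟨t, ht⟩ : a - 1 ∣ b - 1 := by
        have h2 := Nat.sub_dvd_pow_sub_pow a 1 d
        rwa [one_pow, hab] at h2
      have h1 : (X ^ (a - 1) - 1 : F[X]) ∣ (X ^ (b - 1) - 1) := by
        rw [ht, pow_mul]
        simpa using sub_dvd_pow_sub_pow ((X : F[X]) ^ (a - 1)) 1 t
      have h2 : (X ^ a - X : F[X]) = X * (X ^ (a - 1) - 1) := by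
        rw [mul_sub, mul_one, ← pow_succ']
        congr 2
        omega
      have h3 : (X ^ b - X : F[X]) = X * (X ^ (b - 1) - 1) := by
        rw [mul_sub, mul_one, ← pow_succ']
        congr 2
        omega
      rw [h2, h3]
      exact mul_dvd_mul_left _ h1
    -- primitive element of E over F
    set pbE : PowerBasis F E := Field.powerBasisOfFiniteOfSeparable F E with hpbE
    have hgen_int : IsIntegral F pbE.gen := IsIntegral.of_finite F pbE.gen
    have hmin_dvd : minpoly F pbE.gen ∣ (X ^ a - X : F[X]) := by
      apply minpoly.dvd
      rw [map_sub, map_pow, aeval_X]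
      rw [hadef, hEfix pbE.gen, sub_self]
    have hQsplits : Splits ((X ^ b - X : F[X]).map (algebraMap F K)) := by
      rw [Polynomial.map_sub, Polynomial.map_pow, map_X]
      rw [splits_iff_card_roots, ← hcardK]
      rw [FiniteField.roots_X_pow_card_sub_X K,
        FiniteField.X_pow_card_sub_X_natDegree_eq K Fintype.one_lt_card]
      simp
    have hXbne : (X ^ b - X : F[X]) ≠ 0 := FiniteField.X_pow_card_sub_X_ne_zero F hb1
    have hsp : Splits ((minpoly F pbE.gen).map (algebraMap F K)) :=
      hQsplits.of_dvd (Polynomial.map_ne_zero hXbne) (Polynomial.map_dvd _ (hmin_dvd.trans hdvdab))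
    obtain ⟨β, hβ⟩ := hsp.exists_eval_eq_zero (by rw [degree_map]; exact (minpoly.degree_pos hgen_int).ne')
    set ε : E →ₐ[F] K := pbE.lift β (by rw [aeval_def, eval₂_eq_eval_map]; exact hβ) with hε
    letI : Algebra E K := ε.toRingHom.toAlgebra
    haveI : IsScalarTower F E K := IsScalarTower.of_algebraMap_eq fun c => (ε.commutes c).symm
    haveI : Module.Finite E K := Module.Finite.of_restrictScalars_finite F E K
    have hfrEK : Module.finrank E K = d := by
      have h3 := Module.finrank_mul_finrank F E K
      rw [hE, hfrK] at h3
      have h4 : k * Module.finrank E K = k * d := by rw [h3]; ring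
      exact Nat.eq_of_mul_eq_mul_left hk h4
    set f₀ := minpoly E α with hf₀def
    have hintE : IsIntegral E α := IsIntegral.of_finite E α
    have hadj : Algebra.adjoin F ({α} : Set K) = ⊤ := AdjoinRoot.adjoinRoot_eq_top
    have hm₀ : f₀.Monic := minpoly.monic hintE
    have hd₀ : f₀.natDegree = d := by
      rw [hf₀def, aux_minpoly_natDegree α hadj, hfrEK]
    have hminF : minpoly F α = f := by
      rw [hαdef, AdjoinRoot.minpoly_root hmonic.ne_zero, hmonic.leadingCoeff, inv_one,
        map_one, mul_one]
    refine ⟨f₀, hm₀, minpoly.irreducible hintE, hd₀, ?_, ?_⟩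
    · -- the coefficients generate E over F
      set S := Set.range f₀.coeff with hS
      set E₀ := IntermediateField.adjoin F S with hE₀
      have halg : ∀ x ∈ S, IsAlgebraic F x := fun x _ => (IsIntegral.of_finite F x).isAlgebraic
      have hsubalg : E₀.toSubalgebra = Algebra.adjoin F S :=
        IntermediateField.adjoin_toSubalgebra_of_isAlgebraic halg
      letI : Algebra E₀ K := ((algebraMap E K).comp (algebraMap E₀ E)).toAlgebra
      haveI : IsScalarTower E₀ E K := IsScalarTower.of_algebraMap_eq fun c => rfl
      haveI : IsScalarTower F E₀ K := IsScalarTower.of_algebraMap_eq fun c => by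
        show algebraMap F K c = (algebraMap E K) (algebraMap E₀ E (algebraMap F E₀ c))
        rw [← IsScalarTower.algebraMap_apply F E₀ E, ← IsScalarTower.algebraMap_apply F E K]
      haveI : Module.Finite E₀ K := Module.Finite.of_restrictScalars_finite F E₀ K
      have hc : ∀ n, f₀.coeff n ∈ E₀ := fun n =>
        IntermediateField.subset_adjoin F S ⟨n, rfl⟩
      set f₀' : Polynomial E₀ := ∑ n ∈ f₀.support, (monomial n) (⟨f₀.coeff n, hc n⟩ : E₀)
        with hf₀'
      have hmap : f₀'.map (algebraMap E₀ E) = f₀ := by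
        rw [hf₀', Polynomial.map_sum]
        simp only [map_monomial]
        exact (f₀.as_sum_support).symm
      have hinj : Function.Injective (algebraMap E₀ E) := (algebraMap E₀ E).injective
      have hm₀' : f₀'.Monic := Polynomial.monic_of_injective hinj (by rwa [hmap])
      have hirr₀' : Irreducible f₀' :=
        hm₀'.irreducible_of_irreducible_map _ _ (by rw [hmap]; exact minpoly.irreducible hintE)
      have haev₀' : (aeval α) f₀' = 0 := by
        rw [← @aeval_map_algebraMap E₀ E K _ _ _ _ _ _ (IsScalarTower.of_algebraMap_eq fun c => rfl), hmap]
        exact minpoly.aeval E α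
      have hminE₀ : minpoly E₀ α = f₀' := (minpoly.eq_of_irreducible_of_monic hirr₀' haev₀' hm₀').symm
      have hd₀' : (minpoly E₀ α).natDegree = d := by
        rw [hminE₀, ← hd₀, ← hmap, natDegree_map]
      have hfrE₀K : Module.finrank E₀ K = d := by
        haveI : @IsScalarTower F E₀ K _ Algebra.toSMul _ := IsScalarTower.of_algebraMap_eq fun c => by
          show algebraMap F K c = (algebraMap E K) (algebraMap E₀ E (algebraMap F E₀ c))
          rw [← IsScalarTower.algebraMap_apply F E₀ E, ← IsScalarTower.algebraMap_apply F E K]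
        haveI : @Module.Finite E₀ K _ _ Algebra.toModule := Module.Finite.of_restrictScalars_finite F E₀ K
        have h7 := aux_minpoly_natDegree (E := E₀) α hadj
        rw [hd₀'] at h7
        exact h7.symm
      have hfr₀ : Module.finrank F E₀ = k := by
        have h3 := Module.finrank_mul_finrank F E₀ K
        rw [hfrE₀K, hfrK] at h3
        have h4 : Module.finrank F E₀ * d = k * d := by rw [h3]; ring
        exact Nat.eq_of_mul_eq_mul_right hd h4
      have htop : Subalgebra.toSubmodule E₀.toSubalgebra = ⊤ :=
        Submodule.eq_top_of_finrank_eq (by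
          rw [E₀.toSubalgebra.finrank_toSubmodule]
          show Module.finrank F E₀ = Module.finrank F E
          rw [hfr₀, hE])
      have : E₀.toSubalgebra = ⊤ := Algebra.toSubmodule_eq_top.1 htop
      rw [← hsubalg, this]
    · -- the product formula
      set Fn : ℕ → E[X] := fun μ => f₀.map (iterateFrobenius E p (e * μ)) with hFn
      have hfrobk : iterateFrobenius E p (e * k) = RingHom.id E :=
        RingHom.ext fun x => by rw [iterateFrobenius_def]; exact hEfix x
      have hFn0 : Fn 0 = f₀ := by
        rw [hFn]
        simp only [mul_zero, iterateFrobenius_zero, Polynomial.map_id]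
      have hFnk : Fn k = f₀ := by
        rw [hFn]
        simp only [hfrobk, Polynomial.map_id]
      have hshift : ∀ μ, (Fn μ).map (iterateFrobenius E p e) = Fn (μ + 1) := fun μ => by
        rw [hFn, map_map]
        congr 1
        rw [← iterateFrobenius_add]
        congr 1
        ring
      set P := ∏ μ ∈ Finset.range k, Fn μ with hP
      have hPfix : P.map (iterateFrobenius E p e) = P := by
        rw [hP, Polynomial.map_prod]
        have h2 : (∏ μ ∈ Finset.range k, Fn (μ + 1)) * Fn 0
            = (∏ μ ∈ Finset.range k, Fn μ) * Fn k := by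
          rw [← Finset.prod_range_succ', ← Finset.prod_range_succ]
        rw [Finset.prod_congr rfl (fun μ _ => hshift μ)]
        rw [hFnk, ← hFn0] at h2
        exact mul_right_cancel₀ (by rw [hFn0]; exact hm₀.ne_zero) h2
      have hlift : ∀ n, P.coeff n ∈ Set.range (algebraMap F E) := by
        intro n
        have hfix : P.coeff n ^ Fintype.card F = P.coeff n := by
          have h5 := congrArg (fun q : E[X] => q.coeff n) hPfix
          simp only [coeff_map, iterateFrobenius_def] at h5
          rw [hcard]
          exact h5
        obtain ⟨c, hc⟩ := aux_mem_range hfix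
        exact ⟨c, hc⟩
      have hPm : P.Monic := monic_prod_of_monic _ _ fun μ _ => hm₀.map _
      obtain ⟨g, hgmap, hgdeg, hgmonic⟩ :=
        Polynomial.lifts_and_degree_eq_and_monic
          ((Polynomial.lifts_iff_coeff_lifts P).mpr hlift) hPm
      have hdegP : P.natDegree = d * k := by
        rw [hP, natDegree_prod _ _ (fun μ _ => (hm₀.map _).ne_zero)]
        have h6 : ∀ μ ∈ Finset.range k, (Fn μ).natDegree = d := fun μ _ => by
          rw [hFn]
          simp only []
          rw [hm₀.natDegree_map, hd₀]
        rw [Finset.sum_congr rfl h6, Finset.sum_const, Finset.card_range, smul_eq_mul]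
        ring
      have hgnat : g.natDegree = d * k := by
        have := natDegree_eq_of_degree_eq hgdeg
        rw [this, hdegP]
      have haev : (aeval α) g = 0 := by
        rw [← aeval_map_algebraMap E, hgmap, hP, map_prod]
        apply Finset.prod_eq_zero (Finset.mem_range.mpr hk)
        rw [hFn0]
        exact minpoly.aeval E α
      have hfdvd : f ∣ g := hminF ▸ minpoly.dvd F α haev
      have hfeq : f = g := aux_eq_of_monic_dvd hmonic hgmonic hfdvd (by rw [hgnat, hdeg])
      rw [hfeq, hgmap, hP]
  · rintro ⟨f₀, hf₀m, hf₀irr, hf₀d, hgen, hprod⟩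
    haveI : Fact (Irreducible f₀) := ⟨hf₀irr⟩
    set K := AdjoinRoot f₀ with hK
    set α : K := AdjoinRoot.root f₀ with hα
    haveI : Module.Finite E K := (AdjoinRoot.powerBasis hf₀m.ne_zero).finite
    haveI : Module.Finite F K := Module.Finite.trans E K
    have hintF : IsIntegral F α := IsIntegral.of_finite F α
    have hminE : minpoly E α = f₀ := by
      rw [AdjoinRoot.minpoly_root hf₀m.ne_zero, hf₀m.leadingCoeff, inv_one, map_one, mul_one]
    set g := minpoly F α with hg
    have hgm : g.Monic := minpoly.monic hintF
    have hfa : (aeval α) f = 0 := by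
      rw [← aeval_map_algebraMap E, hprod, map_prod]
      apply Finset.prod_eq_zero (Finset.mem_range.mpr hk)
      rw [mul_zero, iterateFrobenius_zero, Polynomial.map_id]
      have h := minpoly.aeval E α
      rw [hminE] at h
      exact h
    have hgdvd : g ∣ f := minpoly.dvd F α hfa
    have hf₀g : f₀ ∣ g.map (algebraMap F E) := hminE ▸ minpoly.dvd_map_of_isScalarTower F E α
    have hconj : ∀ μ : ℕ, f₀.map (iterateFrobenius E p (e * μ)) ∣ g.map (algebraMap F E) := by
      intro μ
      have h2 := Polynomial.map_dvd (iterateFrobenius E p (e * μ)) hf₀g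
      rwa [map_map, hcomm μ] at h2
    have hirrmap : ∀ n : ℕ, Irreducible (f₀.map (iterateFrobenius E p n)) := by
      intro n
      have hbij : Function.Bijective (iterateFrobenius E p n) :=
        ⟨iterateFrobenius_inj E p n,
          Finite.surjective_of_injective (iterateFrobenius_inj E p n)⟩
      set e' : E ≃+* E := RingEquiv.ofBijective _ hbij with he'
      have hco : (iterateFrobenius E p n) = (e' : E →+* E) := rfl
      rw [hco]
      apply Monic.irreducible_of_irreducible_map (e'.symm : E →+* E)
      · exact hf₀m.map _
      · rw [map_map]
        have : (e'.symm : E →+* E).comp (e' : E →+* E) = RingHom.id E :=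
          RingEquiv.symm_toRingHom_comp_toRingHom e'
        rw [this, Polynomial.map_id]
        exact hf₀irr
    have key : ∀ μ ν : ℕ, μ < ν → ν < k →
        f₀.map (iterateFrobenius E p (e * μ)) = f₀.map (iterateFrobenius E p (e * ν)) → False := by
      intro μ ν hlt hνk heq
      set j := μ + k - ν with hj
      have hj1 : 1 ≤ j := by omega
      have hjk : j < k := by omega
      have hcoeff : ∀ c ∈ Set.range f₀.coeff, c ^ p ^ (e * j) = c := by
        rintro c ⟨n, rfl⟩
        have h1 : f₀.coeff n ^ p ^ (e * μ) = f₀.coeff n ^ p ^ (e * ν) := by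
          have := congrArg (fun q : E[X] => q.coeff n) heq
          simpa [coeff_map, iterateFrobenius_def] using this
        have h2 : (f₀.coeff n ^ p ^ (e * μ)) ^ p ^ (e * (k - ν))
            = (f₀.coeff n ^ p ^ (e * ν)) ^ p ^ (e * (k - ν)) := by rw [h1]
        rw [← pow_mul, ← pow_mul, ← pow_add, ← pow_add, ← Nat.mul_add, ← Nat.mul_add] at h2
        have eμ : μ + (k - ν) = j := by omega
        have eν : ν + (k - ν) = k := by omega
        rw [eμ, eν, hEfix] at h2
        exact h2
      have hψcomm : ∀ c : F, iterateFrobenius E p (e * j) (algebraMap F E c) = algebraMap F E c :=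
        hFfix j
      set ψA : E →ₐ[F] E :=
        { toRingHom := iterateFrobenius E p (e * j), commutes' := hψcomm } with hψA
      have hle : Algebra.adjoin F (Set.range f₀.coeff) ≤ AlgHom.equalizer ψA (AlgHom.id F E) :=
        Algebra.adjoin_le (fun c hc => by
          show ψA c = c
          have : iterateFrobenius E p (e * j) c = c := by
            rw [iterateFrobenius_def]; exact hcoeff c hc
          exact this)
      rw [hgen] at hle
      have hall : ∀ x : E, x ^ p ^ (e * j) = x := by
        intro x
        have hx : x ∈ AlgHom.equalizer ψA (AlgHom.id F E) := hle Algebra.mem_top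
        have : ψA x = x := hx
        rw [hψA] at this
        simpa [iterateFrobenius_def] using this
      have hlt2 : p ^ (e * j) < p ^ (e * k) :=
        Nat.pow_lt_pow_right hp1 ((Nat.mul_lt_mul_left (show 0 < e by omega)).mpr hjk)
      have hge := aux_card_le (Nat.one_lt_pow (by positivity) hp1) hall
      omega
    have hdist : ∀ μ ∈ Finset.range k, ∀ ν ∈ Finset.range k, μ ≠ ν →
        f₀.map (iterateFrobenius E p (e * μ)) ≠ f₀.map (iterateFrobenius E p (e * ν)) := by
      intro μ hμ ν hν hne heq
      rcases Nat.lt_or_ge μ ν with h | h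
      · exact key μ ν h (Finset.mem_range.mp hν) heq
      · exact key ν μ (by omega) (Finset.mem_range.mp hμ) heq.symm
    have hcop : (↑(Finset.range k) : Set ℕ).Pairwise
        (Function.onFun IsCoprime fun μ => f₀.map (iterateFrobenius E p (e * μ))) := by
      intro μ hμ ν hν hne
      simp only [Function.onFun]
      refine (hirrmap (e * μ)).coprime_iff_not_dvd.mpr fun hdvd => ?_
      have heq := aux_eq_of_monic_dvd (hf₀m.map _) (hf₀m.map _) hdvd
        (by rw [hf₀m.natDegree_map, hf₀m.natDegree_map])
      exact hdist μ hμ ν hν hne heq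
    have hPdvd : f.map (algebraMap F E) ∣ g.map (algebraMap F E) := by
      rw [hprod]
      exact Finset.prod_dvd_of_coprime hcop (fun μ _ => hconj μ)
    have hdegle : f.natDegree ≤ g.natDegree := by
      have h0 : g.map (algebraMap F E) ≠ 0 := map_ne_zero hgm.ne_zero
      have h3 := Polynomial.natDegree_le_of_dvd hPdvd h0
      rwa [hmonic.natDegree_map, hgm.natDegree_map] at h3
    have hfg : g = f := aux_eq_of_monic_dvd hgm hmonic hgdvd hdegle
    rw [← hfg]
    exact minpoly.irreducible hintF
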